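/- arXiv:2006.10826 — 3 statements merged into one kernel-verified Lean document; each statement's English description precedes it below -/
import Mathlib

section
/- With Φ_k defined as in the paper, and with a_1 = 1, a_l = h + l, l ≥ 1, t ≥ 1, x ≥ 1, the ratio Φ_k((a_j)_{j=1}^{l-1}; t-1, x+1, h) · Φ_k((a_j)_{j=1}^l; t, x-1, h) / ( Φ_k((a_j)_{j=1}^{l-1}; t-1, x, h) · Φ_k((a_j)_{j=1}^l; t, x, h) ) equals x·((k+1)x+(k+1)h+t) / ( ((k+1)(x+l+h-1)+t)·(x+t+k(l-1)+(k+1)h) ). -/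
open Finset

/-- The Pochhammer symbol `(y)_n` for an integer index `n`:
`(y)_n = y(y+1)⋯(y+n-1)` for `n > 0`, `(y)_0 = 1`, and
`(y)_n = 1/((y-1)(y-2)⋯(y+n))` for `n < 0`. -/
noncomputable def poch (y : ℚ) (n : ℤ) : ℚ :=
  if 0 ≤ n then ∏ i ∈ Finset.range n.toNat, (y + i)
  else (∏ i ∈ Finset.range (-n).toNat, (y - 1 - i))⁻¹

/-- The function `Φ_k((a_i)_{i=1}^l; t, x, h)` from the paper: a product of ratios of
Pochhammer symbols.  Here `k, l : ℕ`, the dent positions are `a 1, …, a l`, and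
`t, x, h` are integer parameters.  Empty products are `1`. -/
noncomputable def Phi (k l : ℕ) (a : ℕ → ℤ) (t x h : ℤ) : ℚ :=
  (∏ i ∈ Finset.Icc 1 l,
      poch ((x + h + (l : ℤ) + 1 - a i : ℤ) : ℚ) (t + ((k : ℤ) + 1) * a i - (l : ℤ) - (k : ℤ))
        / poch ((h + (l : ℤ) + 1 - a i : ℤ) : ℚ) (t + ((k : ℤ) + 1) * a i - (l : ℤ) - (k : ℤ)))
  * (∏ j ∈ Finset.Icc 1 (k - 1), ∏ i ∈ Finset.Icc 1 ((l + k - j) / (k + 1)),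
      poch ((((k : ℤ) + 1) * (x + h) + t + (k : ℤ) * ((k : ℤ) + 1) * (i : ℤ)
              + ((j : ℤ) - 1) * (k : ℤ) - ((k : ℤ) + 1) * ((k : ℤ) - 1) : ℤ) : ℚ) (j : ℤ)
        / poch ((((k : ℤ) + 1) * h + t + (k : ℤ) * ((k : ℤ) + 1) * (i : ℤ)
              + ((j : ℤ) - 1) * (k : ℤ) - ((k : ℤ) + 1) * ((k : ℤ) - 1) : ℤ) : ℚ) (j : ℤ))
  * (∏ i ∈ Finset.Icc 1 (l / (k + 1)),
      poch ((((k : ℤ) + 1) * (x + h) + t + (k : ℤ) * ((k : ℤ) + 1) * (i : ℤ) - (k : ℤ) + 1 : ℤ) : ℚ)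
          (((k : ℤ) + 1) * (l : ℤ) + (k : ℤ) - ((k : ℤ) + 1) ^ 2 * (i : ℤ))
        / poch ((((k : ℤ) + 1) * h + t + (k : ℤ) * ((k : ℤ) + 1) * (i : ℤ) - (k : ℤ) + 1 : ℤ) : ℚ)
          (((k : ℤ) + 1) * (l : ℤ) + (k : ℤ) - ((k : ℤ) + 1) ^ 2 * (i : ℤ)))

noncomputable def pochN (y : ℚ) (n : ℕ) : ℚ := ∏ i ∈ Finset.range n, (y + i)

lemma pochN_zero (y : ℚ) : pochN y 0 = 1 := by simp [pochN]

lemma pochN_succ (y : ℚ) (n : ℕ) : pochN y (n+1) = pochN y n * (y + n) := by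
  simp [pochN, Finset.prod_range_succ]

lemma pochN_succ' (y : ℚ) (n : ℕ) : pochN y (n+1) = y * pochN (y+1) n := by
  simp only [pochN]
  rw [Finset.prod_range_succ']
  have h : (∏ x ∈ Finset.range n, (y + ((x+1 : ℕ) : ℚ))) = ∏ x ∈ Finset.range n, (y + 1 + x) :=
    Finset.prod_congr rfl fun i _ => by push_cast; ring
  rw [h]; norm_num; ring

lemma pochN_add (y : ℚ) (m n : ℕ) : pochN y (m+n) = pochN y m * pochN (y + m) n := by
  simp only [pochN]
  rw [Finset.prod_range_add]
  congr 1
  refine Finset.prod_congr rfl fun i _ => ?_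
  push_cast; ring

lemma pochN_shift (y : ℚ) (n : ℕ) : pochN (y+1) n * y = pochN y n * (y + n) := by
  have h1 := pochN_succ y n
  have h2 := pochN_succ' y n
  rw [h1] at h2; linarith [h2]

lemma pochN_pos {y : ℚ} (hy : 0 < y) (n : ℕ) : 0 < pochN y n := by
  refine Finset.prod_pos fun i _ => ?_
  positivity

lemma poch_natCast (y : ℚ) (n : ℕ) : poch y (n : ℤ) = pochN y n := by
  simp [poch, pochN]

lemma poch_toNat (y : ℚ) {n : ℤ} (h : 0 ≤ n) : poch y n = pochN y n.toNat := by
  simp [poch, pochN, if_pos h]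

lemma poch_pos {y : ℚ} {n : ℤ} (hy : 0 < y) (hyn : 0 < y + n) : 0 < poch y n := by
  rcases le_or_gt 0 n with h | h
  · rw [poch_toNat y h]; exact pochN_pos hy _
  · rw [poch, if_neg (by omega)]
    refine inv_pos.mpr (Finset.prod_pos fun i hi => ?_)
    simp only [Finset.mem_range] at hi
    have h1 : (i : ℤ) ≤ -n - 1 := by omega
    have h2 : (i : ℚ) ≤ -(n:ℚ) - 1 := by exact_mod_cast h1
    linarith

lemma poch_shift {y : ℚ} {n : ℤ} (hy : y ≠ 0) (hyn : y + n ≠ 0) :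
    poch (y+1) n * y = poch y n * (y + n) := by
  rcases le_or_gt 0 n with h | h
  · rw [poch_toNat _ h, poch_toNat _ h]
    have : ((n.toNat : ℕ) : ℚ) = (n : ℚ) := by exact_mod_cast Int.toNat_of_nonneg h
    rw [← this]; exact pochN_shift y n.toNat
  · have hm : (-n).toNat = ((-n).toNat - 1) + 1 := by omega
    set m := (-n).toNat - 1 with hmdef
    rw [poch, if_neg (by omega), poch, if_neg (by omega), hm]
    set P : ℚ := ∏ i ∈ Finset.range m, (y - 1 - i) with hP
    have e1 : ∏ i ∈ Finset.range (m+1), (y + 1 - 1 - i) = y * P := by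
      rw [Finset.prod_range_succ']
      have h : (∏ x ∈ Finset.range m, (y + 1 - 1 - ((x+1 : ℕ) : ℚ))) = ∏ x ∈ Finset.range m, (y - 1 - x) :=
        Finset.prod_congr rfl fun i _ => by push_cast; ring
      rw [h]; norm_num; ring
    have e2 : ∏ i ∈ Finset.range (m+1), (y - 1 - i) = P * (y + n) := by
      rw [Finset.prod_range_succ]
      congr 1
      have : ((m:ℕ) : ℚ) = -(n:ℚ) - 1 := by
        have : ((m : ℕ) : ℤ) = -n - 1 := by omega
        exact_mod_cast congrArg (Int.cast : ℤ → ℚ) this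
      rw [this]; ring
    rw [e1, e2, mul_inv, mul_inv]
    rw [mul_comm (y⁻¹) (P⁻¹), mul_assoc, inv_mul_cancel₀ hy, mul_one,
      mul_assoc, inv_mul_cancel₀ hyn, mul_one]

noncomputable def Apart (k l : ℕ) (a : ℕ → ℤ) (t x h : ℤ) : ℚ :=
  ∏ i ∈ Finset.Icc 1 l,
      poch ((x + h + (l : ℤ) + 1 - a i : ℤ) : ℚ) (t + ((k : ℤ) + 1) * a i - (l : ℤ) - (k : ℤ))

noncomputable def Upart (k l : ℕ) (w : ℚ) : ℚ :=
  (∏ j ∈ Finset.Icc 1 (k - 1), ∏ i ∈ Finset.Icc 1 ((l + k - j) / (k + 1)),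
      pochN (w + (k:ℚ) * ((k:ℚ)+1) * i + ((j:ℚ)-1) * k - ((k:ℚ)+1) * ((k:ℚ)-1)) j)
  * ∏ i ∈ Finset.Icc 1 (l / (k + 1)),
      pochN (w + (k:ℚ) * ((k:ℚ)+1) * i - (k:ℚ) + 1) ((k+1) * l + k - (k+1)^2 * i)

noncomputable def Delta (k l : ℕ) (z : ℚ) : ℚ :=
  pochN (z + (k:ℚ) * l + 1) (l % (k+1))
  * ∏ i ∈ Finset.Icc 1 (l / (k+1)), pochN (z + ((k:ℚ)+1) * ((l:ℚ) - i) + 1) (k+1)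

lemma nat_div_helper (k d s : ℕ) (h : s < k+1) : ((k+1)*d + s)/(k+1) = d := by
  rw [Nat.mul_add_div (by omega)]; simp [Nat.div_eq_of_lt h]

lemma nat_mod_helper (k d s : ℕ) (h : s < k+1) : ((k+1)*d + s) % (k+1) = s := by
  rw [Nat.mul_add_mod]; exact Nat.mod_eq_of_lt h

lemma Upart_zero (k : ℕ) (w : ℚ) : Upart k 0 w = 1 := by
  have h1 : ∀ j ∈ Finset.Icc 1 (k-1), (0 + k - j) / (k+1) = 0 := fun j hj => by
    simp only [Finset.mem_Icc] at hj
    exact Nat.div_eq_of_lt (by omega)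
  have h2 : (0 : ℕ) / (k+1) = 0 := Nat.zero_div _
  rw [Upart, h2]
  rw [Finset.prod_congr rfl (fun j hj => by rw [h1 j hj])]
  simp

lemma Upart_one (k : ℕ) (w : ℚ) : Upart k 1 w = 1 := by
  have h1 : ∀ j ∈ Finset.Icc 1 (k-1), (1 + k - j) / (k+1) = 0 := fun j hj => by
    simp only [Finset.mem_Icc] at hj
    exact Nat.div_eq_of_lt (by omega)
  rw [Upart]
  rw [Finset.prod_congr rfl (fun j hj => by rw [h1 j hj])]
  rcases Nat.eq_zero_or_pos k with hk | hk
  · subst hk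
    norm_num
    exact pochN_zero _
  · have h2 : (1 : ℕ) / (k+1) = 0 := Nat.div_eq_of_lt (by omega)
    rw [h2]
    simp

/-- telescoping chain lemma -/
lemma chain_lemma (A B y : ℕ → ℚ) (hshift : ∀ j : ℕ, B (j+1) * y (j+1) = A (j+1) * y j) :
    ∀ p : ℕ, y (p+1) * (∏ i ∈ Finset.Icc 1 p, A i) * (∏ i ∈ Finset.Icc 1 p, B (i+1)) * y 0
      = y p * y 1 * (∏ i ∈ Finset.Icc 1 p, A (i+1)) * (∏ i ∈ Finset.Icc 1 p, B i) := by
  intro p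
  induction p with
  | zero => simp; ring
  | succ p ih =>
    rw [Finset.prod_Icc_succ_top (by omega : 1 ≤ p+1) A,
        Finset.prod_Icc_succ_top (by omega : 1 ≤ p+1) (fun i => B (i+1)),
        Finset.prod_Icc_succ_top (by omega : 1 ≤ p+1) (fun i => A (i+1)),
        Finset.prod_Icc_succ_top (by omega : 1 ≤ p+1) B]
    have h1 := hshift (p+1)
    have h2 := hshift p
    calc y (p+2) * ((∏ i ∈ Finset.Icc 1 p, A i) * A (p+1))
          * ((∏ i ∈ Finset.Icc 1 p, B (i+1)) * B (p+2)) * y 0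
        = (B (p+2) * y (p+2)) * (∏ i ∈ Finset.Icc 1 p, A i)
          * (∏ i ∈ Finset.Icc 1 p, B (i+1)) * y 0 * A (p+1) := by ring
      _ = (A (p+2) * y (p+1)) * (∏ i ∈ Finset.Icc 1 p, A i)
          * (∏ i ∈ Finset.Icc 1 p, B (i+1)) * y 0 * A (p+1) := by rw [h1]
      _ = (y (p+1) * (∏ i ∈ Finset.Icc 1 p, A i) * (∏ i ∈ Finset.Icc 1 p, B (i+1)) * y 0)
          * (A (p+2) * A (p+1)) := by ring
      _ = (y p * y 1 * (∏ i ∈ Finset.Icc 1 p, A (i+1)) * (∏ i ∈ Finset.Icc 1 p, B i))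
          * (A (p+2) * A (p+1)) := by rw [ih]
      _ = (A (p+1) * y p) * y 1 * (∏ i ∈ Finset.Icc 1 p, A (i+1))
          * (∏ i ∈ Finset.Icc 1 p, B i) * A (p+2) := by ring
      _ = (B (p+1) * y (p+1)) * y 1 * (∏ i ∈ Finset.Icc 1 p, A (i+1))
          * (∏ i ∈ Finset.Icc 1 p, B i) * A (p+2) := by rw [h2]
      _ = y (p+1) * y 1 * ((∏ i ∈ Finset.Icc 1 p, A (i+1)) * A (p+2))
          * ((∏ i ∈ Finset.Icc 1 p, B i) * B (p+1)) := by ring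

lemma U_succ (k l : ℕ) (z : ℚ) : Upart k (l+1) z = Upart k l z * Delta k l z := by
  obtain ⟨d, r, hld, hr⟩ : ∃ d r, l = (k+1)*d + r ∧ r < k+1 :=
    ⟨l/(k+1), l%(k+1), (Nat.div_add_mod l (k+1)).symm, Nat.mod_lt _ (by omega)⟩
  have hdiv : l / (k+1) = d := by rw [hld]; exact nat_div_helper k d r hr
  have hmod : l % (k+1) = r := by rw [hld]; exact nat_mod_helper k d r hr
  have hcast : (l:ℚ) = ((k:ℚ)+1)*d + r := by
    have := congrArg (Nat.cast : ℕ → ℚ) hld; push_cast at this; linarith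
  have emul : (k+1)*(d+1) = (k+1)*d + (k+1) := by ring
  have emul2 : (k+1)^2*(d+1) = (k+1)^2*d + (k+1)^2 := by ring
  -- B-part per-j
  have hBj : ∀ j ∈ Finset.Icc 1 (k-1),
      (∏ i ∈ Finset.Icc 1 ((l+1+k-j)/(k+1)),
        pochN (z + (k:ℚ) * ((k:ℚ)+1) * i + ((j:ℚ)-1) * k - ((k:ℚ)+1) * ((k:ℚ)-1)) j)
      = (∏ i ∈ Finset.Icc 1 ((l+k-j)/(k+1)),
        pochN (z + (k:ℚ) * ((k:ℚ)+1) * i + ((j:ℚ)-1) * k - ((k:ℚ)+1) * ((k:ℚ)-1)) j)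
        * (if j = r then
            pochN (z + (k:ℚ) * ((k:ℚ)+1) * (d+1:ℕ) + ((j:ℚ)-1) * k - ((k:ℚ)+1) * ((k:ℚ)-1)) j
          else 1) := by
    intro j hj
    simp only [Finset.mem_Icc] at hj
    have hk1 : 1 ≤ k - 1 := le_trans hj.1 hj.2
    have hk : 2 ≤ k := by omega
    by_cases hjr : j = r
    · subst hjr
      have e1 : l+1+k-j = (k+1)*(d+1) := by omega
      have e2 : l+k-j = (k+1)*d + k := by omega
      have d1 : (l+1+k-j)/(k+1) = d+1 := by
        rw [e1, show (k+1)*(d+1) = (k+1)*(d+1) + 0 by ring]; exact nat_div_helper k (d+1) 0 (by omega)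
      have d2 : (l+k-j)/(k+1) = d := by rw [e2]; exact nat_div_helper k d k (by omega)
      rw [d1, d2, if_pos rfl, Finset.prod_Icc_succ_top (by omega : 1 ≤ d+1)]
    · rw [if_neg hjr, mul_one]
      rcases lt_or_gt_of_ne hjr with hlt | hgt
      · -- j < r
        have e1 : l+1+k-j = (k+1)*(d+1) + (r-j-1+1) := by omega
        have e2 : l+k-j = (k+1)*(d+1) + (r-j-1) := by omega
        rw [e1, e2, nat_div_helper k (d+1) _ (by omega), nat_div_helper k (d+1) _ (by omega)]
      · -- j > r
        have e1 : l+1+k-j = (k+1)*d + (r+k+1-j) := by omega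
        have e2 : l+k-j = (k+1)*d + (r+k-j) := by omega
        rw [e1, e2, nat_div_helper k d _ (by omega), nat_div_helper k d _ (by omega)]
  have hB : (∏ j ∈ Finset.Icc 1 (k-1), ∏ i ∈ Finset.Icc 1 ((l+1+k-j)/(k+1)),
        pochN (z + (k:ℚ) * ((k:ℚ)+1) * i + ((j:ℚ)-1) * k - ((k:ℚ)+1) * ((k:ℚ)-1)) j)
      = (∏ j ∈ Finset.Icc 1 (k-1), ∏ i ∈ Finset.Icc 1 ((l+k-j)/(k+1)),
        pochN (z + (k:ℚ) * ((k:ℚ)+1) * i + ((j:ℚ)-1) * k - ((k:ℚ)+1) * ((k:ℚ)-1)) j)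
        * (if r ∈ Finset.Icc 1 (k-1) then
            pochN (z + (k:ℚ) * ((k:ℚ)+1) * (d+1:ℕ) + ((r:ℚ)-1) * k - ((k:ℚ)+1) * ((k:ℚ)-1)) r
          else 1) := by
    rw [Finset.prod_congr rfl hBj, Finset.prod_mul_distrib]
    congr 1
    exact Finset.prod_ite_eq' (Finset.Icc 1 (k-1)) r
      (fun j => pochN (z + (k:ℚ) * ((k:ℚ)+1) * (d+1:ℕ) + ((j:ℚ)-1) * k - ((k:ℚ)+1) * ((k:ℚ)-1)) j)
  -- C-part
  have hLex : ∀ i ∈ Finset.Icc 1 d, (k+1)^2*i ≤ (k+1)*l := by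
    intro i hi
    simp only [Finset.mem_Icc] at hi
    calc (k+1)^2*i = (k+1)*((k+1)*i) := by ring
    _ ≤ (k+1)*((k+1)*d) := by
        exact Nat.mul_le_mul_left _ (Nat.mul_le_mul_left _ hi.2)
    _ ≤ (k+1)*l := Nat.mul_le_mul_left _ (by omega)
  have hCi : ∀ i ∈ Finset.Icc 1 d,
      pochN (z + (k:ℚ) * ((k:ℚ)+1) * i - (k:ℚ) + 1) ((k+1) * (l+1) + k - (k+1)^2 * i)
      = pochN (z + (k:ℚ) * ((k:ℚ)+1) * i - (k:ℚ) + 1) ((k+1) * l + k - (k+1)^2 * i)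
        * pochN (z + ((k:ℚ)+1) * ((l:ℚ) - i) + 1) (k+1) := by
    intro i hi
    have hle := hLex i hi
    simp only [Finset.mem_Icc] at hi
    have e3 : (k+1)*(l+1) = (k+1)*l + (k+1) := by ring
    have e1 : (k+1) * (l+1) + k - (k+1)^2 * i = ((k+1) * l + k - (k+1)^2 * i) + (k+1) := by omega
    rw [e1, pochN_add]
    congr 1
    have hc : (((k+1) * l + k - (k+1)^2 * i : ℕ) : ℚ)
        = ((k:ℚ)+1) * l + k - ((k:ℚ)+1)^2 * i := by
      have : ((k+1)^2 * i : ℕ) ≤ (k+1)*l + k := by omega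
      push_cast [Nat.cast_sub this]
      ring
    rw [hc]; ring_nf
  have hC : (∏ i ∈ Finset.Icc 1 ((l+1)/(k+1)),
        pochN (z + (k:ℚ) * ((k:ℚ)+1) * i - (k:ℚ) + 1) ((k+1) * (l+1) + k - (k+1)^2 * i))
      = ((∏ i ∈ Finset.Icc 1 (l/(k+1)),
          pochN (z + (k:ℚ) * ((k:ℚ)+1) * i - (k:ℚ) + 1) ((k+1) * l + k - (k+1)^2 * i))
        * ∏ i ∈ Finset.Icc 1 (l/(k+1)), pochN (z + ((k:ℚ)+1) * ((l:ℚ) - i) + 1) (k+1))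
        * (if r = k then pochN (z + (k:ℚ)*l + 1) k else 1) := by
    rw [hdiv]
    by_cases hrk : r = k
    · have e1 : l+1 = (k+1)*(d+1) := by omega
      have d1 : (l+1)/(k+1) = d+1 := by
        rw [e1, show (k+1)*(d+1) = (k+1)*(d+1) + 0 by ring]; exact nat_div_helper k (d+1) 0 (by omega)
      rw [d1, Finset.prod_Icc_succ_top (by omega : 1 ≤ d+1), if_pos hrk]
      rw [Finset.prod_congr rfl hCi, Finset.prod_mul_distrib]
      congr 1
      · -- top factor
        have eL : (k+1) * (l+1) + k - (k+1)^2 * (d+1) = k := by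
          have : (k+1)*(l+1) = (k+1)^2*(d+1) := by rw [e1]; ring
          omega
        rw [eL]
        congr 1
        have hrq : (r:ℚ) = k := by exact_mod_cast hrk
        push_cast
        rw [hcast, hrq]; ring
    · have e1 : l+1 = (k+1)*d + (r+1) := by omega
      have d1 : (l+1)/(k+1) = d := by
        rw [e1]; exact nat_div_helper k d (r+1) (by omega)
      rw [d1, if_neg hrk, mul_one, Finset.prod_congr rfl hCi, Finset.prod_mul_distrib]
  -- assemble
  rw [Upart, Upart, Delta, hB, hC, hdiv, hmod]
  have hextra : (if r ∈ Finset.Icc 1 (k-1) then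
        pochN (z + (k:ℚ) * ((k:ℚ)+1) * (d+1:ℕ) + ((r:ℚ)-1) * k - ((k:ℚ)+1) * ((k:ℚ)-1)) r
      else 1) * (if r = k then pochN (z + (k:ℚ)*l + 1) k else 1)
      = pochN (z + (k:ℚ) * l + 1) r := by
    by_cases hrk : r = k
    · have : r ∉ Finset.Icc 1 (k-1) := by
        simp only [Finset.mem_Icc]; omega
      rw [if_neg this, if_pos hrk, one_mul, hrk]
    · rw [if_neg hrk]
      rcases Nat.eq_zero_or_pos r with hr0 | hr0
      · have : r ∉ Finset.Icc 1 (k-1) := by simp only [Finset.mem_Icc]; omega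
        rw [if_neg this, hr0, pochN_zero, one_mul]
      · have : r ∈ Finset.Icc 1 (k-1) := by simp only [Finset.mem_Icc]; omega
        rw [if_pos this, mul_one]
        congr 1
        push_cast
        rw [hcast]; ring
  rw [← hextra]; ring

lemma residualDelta (k m : ℕ) (w : ℚ) :
    Delta k m (w + k) * Delta k (m+1) (w - ((k:ℚ)+1)) * (w + ((k:ℚ)+1)*((m:ℚ)+1))
      = Delta k m (w - 1) * Delta k (m+1) w * (w + ((k:ℚ)+1)*(m:ℚ)) := by
  obtain ⟨d, r, hld, hr⟩ : ∃ d r, m+1 = (k+1)*d + r ∧ r < k+1 :=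
    ⟨(m+1)/(k+1), (m+1)%(k+1), (Nat.div_add_mod _ _).symm, Nat.mod_lt _ (by omega)⟩
  have hdiv : (m+1) / (k+1) = d := by rw [hld]; exact nat_div_helper k d r hr
  have hmod : (m+1) % (k+1) = r := by rw [hld]; exact nat_mod_helper k d r hr
  have hcast : (m:ℚ) = ((k:ℚ)+1)*(d:ℚ) + (r:ℚ) - 1 := by
    have := congrArg (Nat.cast : ℕ → ℚ) hld; push_cast at this; linarith
  -- canonical forms of the four Deltas
  have D1 : Delta k m (w + (k:ℚ)) = pochN (w + (k:ℚ)*(m:ℚ) + (k:ℚ) + 1) (m%(k+1))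
      * ∏ i ∈ Finset.Icc 1 (m/(k+1)), pochN (w + ((k:ℚ)+1)*((m:ℚ)+1-(i:ℚ))) (k+1) := by
    rw [Delta]
    congr 1
    · congr 1; ring
    · exact Finset.prod_congr rfl fun i _ => by congr 1; ring
  have D2 : Delta k (m+1) (w - ((k:ℚ)+1)) = pochN (w + (k:ℚ)*(m:ℚ)) ((m+1)%(k+1))
      * ∏ i ∈ Finset.Icc 1 ((m+1)/(k+1)), pochN (w + ((k:ℚ)+1)*((m:ℚ)-(i:ℚ)) + 1) (k+1) := by
    rw [Delta]
    congr 1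
    · congr 1; push_cast; ring
    · exact Finset.prod_congr rfl fun i _ => by congr 1; push_cast; ring
  have D3 : Delta k m (w - 1) = pochN (w + (k:ℚ)*(m:ℚ)) (m%(k+1))
      * ∏ i ∈ Finset.Icc 1 (m/(k+1)), pochN (w + ((k:ℚ)+1)*((m:ℚ)-(i:ℚ))) (k+1) := by
    rw [Delta]
    congr 1
    · congr 1; ring
    · exact Finset.prod_congr rfl fun i _ => by congr 1; ring
  have D4 : Delta k (m+1) w = pochN (w + (k:ℚ)*(m:ℚ) + (k:ℚ) + 1) ((m+1)%(k+1))
      * ∏ i ∈ Finset.Icc 1 ((m+1)/(k+1)), pochN (w + ((k:ℚ)+1)*((m:ℚ)+1-(i:ℚ)) + 1) (k+1) := by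
    rw [Delta]
    congr 1
    · congr 1; push_cast; ring
    · exact Finset.prod_congr rfl fun i _ => by congr 1; push_cast; ring
  -- the chain identity, canonicalized
  have hsh : ∀ j : ℕ,
      (fun i : ℕ => pochN (w + ((k:ℚ)+1)*((m:ℚ)+1-(i:ℚ)) + 1) (k+1)) (j+1)
        * (fun i : ℕ => w + ((k:ℚ)+1)*((m:ℚ)+1-(i:ℚ))) (j+1)
      = (fun i : ℕ => pochN (w + ((k:ℚ)+1)*((m:ℚ)+1-(i:ℚ))) (k+1)) (j+1)
        * (fun i : ℕ => w + ((k:ℚ)+1)*((m:ℚ)+1-(i:ℚ))) j := by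
    intro j
    simp only []
    have h := pochN_shift (w + ((k:ℚ)+1)*((m:ℚ)+1-((j+1:ℕ):ℚ))) (k+1)
    push_cast at h ⊢
    linear_combination h
  have chainC := chain_lemma
    (fun i : ℕ => pochN (w + ((k:ℚ)+1)*((m:ℚ)+1-(i:ℚ))) (k+1))
    (fun i : ℕ => pochN (w + ((k:ℚ)+1)*((m:ℚ)+1-(i:ℚ)) + 1) (k+1))
    (fun j : ℕ => w + ((k:ℚ)+1)*((m:ℚ)+1-(j:ℚ))) hsh
  have eA : ∀ p : ℕ, (∏ i ∈ Finset.Icc 1 p,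
        pochN (w + ((k:ℚ)+1)*((m:ℚ)+1-((i+1:ℕ):ℚ))) (k+1))
      = ∏ i ∈ Finset.Icc 1 p, pochN (w + ((k:ℚ)+1)*((m:ℚ)-(i:ℚ))) (k+1) :=
    fun p => Finset.prod_congr rfl fun i _ => by congr 1; push_cast; ring
  have eB : ∀ p : ℕ, (∏ i ∈ Finset.Icc 1 p,
        pochN (w + ((k:ℚ)+1)*((m:ℚ)+1-((i+1:ℕ):ℚ)) + 1) (k+1))
      = ∏ i ∈ Finset.Icc 1 p, pochN (w + ((k:ℚ)+1)*((m:ℚ)-(i:ℚ)) + 1) (k+1) :=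
    fun p => Finset.prod_congr rfl fun i _ => by congr 1; push_cast; ring
  rw [D1, D2, D3, D4, hdiv, hmod]
  rcases Nat.eq_zero_or_pos r with hr0 | hr1
  · -- r = 0 : m = (k+1)*e + k with d = e+1
    obtain ⟨e, rfl⟩ : ∃ e, d = e + 1 := by
      rcases d with _ | e
      · exfalso; rw [hr0] at hld; simp at hld
      · exact ⟨e, rfl⟩
    have emul : (k+1)*(e+1) = (k+1)*e + (k+1) := by ring
    have hm1 : m = (k+1)*e + k := by omega
    have hmdiv : m / (k+1) = e := by rw [hm1]; exact nat_div_helper k e k (by omega)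
    have hmmod : m % (k+1) = k := by rw [hm1]; exact nat_mod_helper k e k (by omega)
    have hrq : ((r:ℕ):ℚ) = 0 := by exact_mod_cast hr0
    have hcast0 : (m:ℚ) = ((k:ℚ)+1)*((e:ℚ)+1) - 1 := by
      push_cast at hcast; rw [hrq] at hcast; linarith
    rw [hmdiv, hmmod, hr0]
    simp only [pochN_zero, one_mul, mul_one]
    have C := chainC e
    rw [eA e, eB e] at C
    rw [Finset.prod_Icc_succ_top (by omega : 1 ≤ e + 1)
        (fun i => pochN (w + ((k:ℚ)+1)*((m:ℚ)-(i:ℚ)) + 1) (k+1)),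
        Finset.prod_Icc_succ_top (by omega : 1 ≤ e + 1)
        (fun i => pochN (w + ((k:ℚ)+1)*((m:ℚ)+1-(i:ℚ)) + 1) (k+1))]
    have hB1 : pochN (w + ((k:ℚ)+1)*((m:ℚ)-((e+1:ℕ):ℚ)) + 1) (k+1)
        = pochN (w + (k:ℚ)*(m:ℚ)) k * (w + ((k:ℚ)+1)*((m:ℚ)+1-((e+1:ℕ):ℚ))) := by
      have h1 : w + ((k:ℚ)+1)*((m:ℚ)-((e+1:ℕ):ℚ)) + 1 = w + (k:ℚ)*(m:ℚ) := by
        push_cast; rw [hcast0]; ring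
      rw [h1, pochN_succ]
      congr 1
      push_cast; rw [hcast0]; ring
    have hB2 : pochN (w + ((k:ℚ)+1)*((m:ℚ)+1-((e+1:ℕ):ℚ)) + 1) (k+1)
        = pochN (w + (k:ℚ)*(m:ℚ) + (k:ℚ) + 1) k * (w + ((k:ℚ)+1)*((m:ℚ)+1-((e:ℕ):ℚ))) := by
      have h1 : w + ((k:ℚ)+1)*((m:ℚ)+1-((e+1:ℕ):ℚ)) + 1 = w + (k:ℚ)*(m:ℚ) + (k:ℚ) + 1 := by
        push_cast; rw [hcast0]; ring
      rw [h1, pochN_succ]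
      congr 1
      push_cast; rw [hcast0]; ring
    rw [hB1, hB2]
    linear_combination (pochN (w + (k:ℚ)*(m:ℚ)) k * pochN (w + (k:ℚ)*(m:ℚ) + (k:ℚ) + 1) k) * C
  · -- r ≥ 1
    have hm1 : m = (k+1)*d + (r-1) := by omega
    have hmdiv : m / (k+1) = d := by rw [hm1]; exact nat_div_helper k d (r-1) (by omega)
    have hmmod : m % (k+1) = r - 1 := by rw [hm1]; exact nat_mod_helper k d (r-1) (by omega)
    rw [hmdiv, hmmod]
    have C := chainC d
    rw [eA d, eB d] at C
    have hrc : r = (r-1)+1 := by omega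
    have hsub : ((r-1:ℕ):ℚ) = (r:ℚ) - 1 := by
      push_cast [Nat.cast_sub (show 1 ≤ r by omega)]; ring
    have hP2 : pochN (w + (k:ℚ)*(m:ℚ)) r
        = pochN (w + (k:ℚ)*(m:ℚ)) (r-1) * (w + ((k:ℚ)+1)*((m:ℚ)+1-((d+1:ℕ):ℚ))) := by
      conv_lhs => rw [hrc]
      rw [pochN_succ]
      congr 1
      rw [hsub]; push_cast; rw [hcast]; ring
    have hP4 : pochN (w + (k:ℚ)*(m:ℚ) + (k:ℚ) + 1) r
        = pochN (w + (k:ℚ)*(m:ℚ) + (k:ℚ) + 1) (r-1) * (w + ((k:ℚ)+1)*((m:ℚ)+1-((d:ℕ):ℚ))) := by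
      conv_lhs => rw [hrc]
      rw [pochN_succ]
      congr 1
      rw [hsub]; push_cast; rw [hcast]; ring
    rw [hP2, hP4]
    linear_combination (pochN (w + (k:ℚ)*(m:ℚ)) (r-1)
      * pochN (w + (k:ℚ)*(m:ℚ) + (k:ℚ) + 1) (r-1)) * C

lemma UM (k : ℕ) : ∀ l : ℕ, 1 ≤ l → ∀ w : ℚ, 0 < w →
    Upart k (l-1) (w + (k:ℚ)) * Upart k l (w - ((k:ℚ)+1)) * (w + ((k:ℚ)+1)*((l:ℚ)-1))
      = Upart k (l-1) (w - 1) * Upart k l w * w := by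
  intro l
  induction l with
  | zero => omega
  | succ n ih =>
    intro _ w hw
    rcases Nat.eq_zero_or_pos n with h0 | h1
    · subst h0
      norm_num [Upart_zero, Upart_one]
    · have ihw := ih h1 w hw
      obtain ⟨m, rfl⟩ : ∃ m, n = m+1 := ⟨n-1, by omega⟩
      rw [show m+1+1-1 = m+1 from rfl]
      rw [show m+1-1 = m from rfl] at ihw
      rw [U_succ k (m+1) (w - ((k:ℚ)+1)), U_succ k (m+1) w,
          U_succ k m (w + (k:ℚ)), U_succ k m (w - 1)]
      have res := residualDelta k m w
      have hs : w + ((k:ℚ)+1)*(m:ℚ) ≠ 0 := by positivity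
      apply mul_right_cancel₀ hs
      push_cast at ihw ⊢
      linear_combination
        (Delta k m (w + (k:ℚ)) * Delta k (m+1) (w - ((k:ℚ)+1)) * (w + ((k:ℚ)+1)*((m:ℚ)+1))) * ihw
        + (Upart k m (w-1) * Upart k (m+1) w * w) * res

lemma Apart_E (k lam : ℕ) (a : ℕ → ℤ) (t' x0 h : ℤ)
    (hZW : ∀ i ∈ Finset.Icc 1 lam,
      0 < x0 + h + (lam:ℤ) + 1 - a i ∧ 0 < x0 + h + t' + 1 + (k:ℤ)*a i - (k:ℤ)) :
    Apart k lam a t' (x0+1) h * (∏ i ∈ Finset.Icc 1 lam, ((x0 + h + (lam:ℤ) + 1 - a i : ℤ) : ℚ))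
      = Apart k lam a t' x0 h
        * ∏ i ∈ Finset.Icc 1 lam, ((x0 + h + t' + 1 + (k:ℤ)*a i - (k:ℤ) : ℤ) : ℚ) := by
  rw [Apart, Apart, ← Finset.prod_mul_distrib, ← Finset.prod_mul_distrib]
  refine Finset.prod_congr rfl fun i hi => ?_
  obtain ⟨hZ, hW⟩ := hZW i hi
  have hb : (x0 + 1 + h + (lam:ℤ) + 1 - a i : ℤ) = (x0 + h + (lam:ℤ) + 1 - a i) + 1 := by ring
  have hw : (x0 + h + t' + 1 + (k:ℤ)*a i - (k:ℤ) : ℤ)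
      = (x0 + h + (lam:ℤ) + 1 - a i) + (t' + ((k:ℤ)+1) * a i - (lam:ℤ) - (k:ℤ)) := by ring
  rw [hb, hw, Int.cast_add, Int.cast_one, Int.cast_add]
  exact poch_shift (by exact_mod_cast hZ.ne')
    (by rw [← Int.cast_add]; exact_mod_cast (by omega : (0:ℤ) < (x0 + h + (lam:ℤ) + 1 - a i) + (t' + ((k:ℤ)+1) * a i - (lam:ℤ) - (k:ℤ))).ne')

lemma AM (k l : ℕ) (a : ℕ → ℤ) (t x h : ℤ) (hl : 1 ≤ l) (ht : 1 ≤ t) (hx : 1 ≤ x)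
    (hh : 0 ≤ h) (hk : 0 ≤ (k:ℤ))
    (hbd : ∀ i ∈ Finset.Icc 1 l, 1 ≤ a i ∧ a i ≤ h + i) (hal : a l = h + (l : ℤ)) :
    Apart k (l-1) a (t-1) (x+1) h * Apart k l a t (x-1) h
        * ((x + h + t + (k:ℤ)*(h+(l:ℤ)) - (k:ℤ) : ℤ) : ℚ)
      = Apart k (l-1) a (t-1) x h * Apart k l a t x h * (x : ℚ) := by
  have hlm : ((l-1:ℕ):ℤ) = (l:ℤ) - 1 := by omega
  have hbd' : ∀ i ∈ Finset.Icc 1 l, 1 ≤ a i ∧ a i ≤ h + (l:ℤ) := by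
    intro i hi
    simp only [Finset.mem_Icc] at hi
    obtain ⟨h1, h2⟩ := hbd i (by simp only [Finset.mem_Icc]; omega)
    exact ⟨h1, by omega⟩
  have hka : ∀ i ∈ Finset.Icc 1 l, (k:ℤ) ≤ (k:ℤ) * a i := fun i hi => by
    have h1 := (hbd' i hi).1
    nlinarith [hk]
  -- E1 at (l-1, t-1, x)
  have E1 := Apart_E k (l-1) a (t-1) x h (by
    intro i hi
    simp only [Finset.mem_Icc] at hi
    have hmem : i ∈ Finset.Icc 1 l := by simp only [Finset.mem_Icc]; omega
    obtain ⟨h1, h2⟩ := hbd i hmem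
    have h3 := hka i hmem
    constructor
    · omega
    · omega)
  -- E2 at (l, t, x-1)
  have E2 := Apart_E k l a t (x-1) h (by
    intro i hi
    obtain ⟨h1, h2⟩ := hbd' i hi
    have h3 := hka i hi
    constructor
    · omega
    · omega)
  rw [show x - 1 + 1 = x by ring] at E2
  -- canonical G-products
  set G1 : ℚ := ∏ i ∈ Finset.Icc 1 (l-1), ((x + h + (l:ℤ) - a i : ℤ) : ℚ) with hG1
  set G2 : ℚ := ∏ i ∈ Finset.Icc 1 (l-1), ((x + h + t + (k:ℤ)*a i - (k:ℤ) : ℤ) : ℚ) with hG2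
  have c1 : (∏ i ∈ Finset.Icc 1 (l-1), ((x + h + ((l-1:ℕ):ℤ) + 1 - a i : ℤ) : ℚ)) = G1 := by
    rw [hG1]; exact Finset.prod_congr rfl fun i _ => by congr 1; omega
  have c2 : (∏ i ∈ Finset.Icc 1 (l-1), ((x + h + (t-1) + 1 + (k:ℤ)*a i - (k:ℤ) : ℤ) : ℚ)) = G2 := by
    rw [hG2]; exact Finset.prod_congr rfl fun i _ => by congr 1; omega
  rw [c1, c2] at E1
  -- split the length-l products in E2
  have hsplit : ∀ f : ℕ → ℚ, ∏ i ∈ Finset.Icc 1 l, f i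
      = (∏ i ∈ Finset.Icc 1 (l-1), f i) * f l := by
    intro f
    rw [show l = (l-1)+1 by omega, Finset.prod_Icc_succ_top (by omega : 1 ≤ (l-1)+1) f,
      show (l-1)+1 = l by omega]
  rw [hsplit, hsplit] at E2
  have c3 : (∏ i ∈ Finset.Icc 1 (l-1), ((x - 1 + h + (l:ℤ) + 1 - a i : ℤ) : ℚ)) = G1 := by
    rw [hG1]; exact Finset.prod_congr rfl fun i _ => by congr 1; ring
  have c4 : (∏ i ∈ Finset.Icc 1 (l-1), ((x - 1 + h + t + 1 + (k:ℤ)*a i - (k:ℤ) : ℤ) : ℚ)) = G2 := by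
    rw [hG2]; exact Finset.prod_congr rfl fun i _ => by congr 1; ring
  rw [c3, c4] at E2
  have c5 : ((x - 1 + h + (l:ℤ) + 1 - a l : ℤ) : ℚ) = (x:ℚ) := by
    rw [show (x - 1 + h + (l:ℤ) + 1 - a l : ℤ) = x by rw [hal]; ring]
  have c6 : ((x - 1 + h + t + 1 + (k:ℤ)*a l - (k:ℤ) : ℤ) : ℚ)
      = ((x + h + t + (k:ℤ)*(h+(l:ℤ)) - (k:ℤ) : ℤ) : ℚ) := by
    congr 1; rw [hal]; ring
  rw [c5, c6] at E2
  -- cancel G1 * G2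
  have hG1pos : 0 < G1 := by
    rw [hG1]
    refine Finset.prod_pos fun i hi => ?_
    simp only [Finset.mem_Icc] at hi
    obtain ⟨h1, h2⟩ := hbd i (by simp only [Finset.mem_Icc]; omega)
    exact_mod_cast (by omega : (0:ℤ) < x + h + (l:ℤ) - a i)
  have hG2pos : 0 < G2 := by
    rw [hG2]
    refine Finset.prod_pos fun i hi => ?_
    simp only [Finset.mem_Icc] at hi
    have hmem : i ∈ Finset.Icc 1 l := by simp only [Finset.mem_Icc]; omega
    obtain ⟨h1, h2⟩ := hbd i hmem
    have h3 := hka i hmem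
    exact_mod_cast (by omega : (0:ℤ) < x + h + t + (k:ℤ)*a i - (k:ℤ))
  apply mul_right_cancel₀ (b := G1 * G2) (by positivity)
  linear_combination (Apart k l a t (x-1) h
      * G2 * ((x + h + t + (k:ℤ)*(h+(l:ℤ)) - (k:ℤ) : ℤ) : ℚ)) * E1
    - (Apart k (l-1) a (t-1) x h * G2) * E2

lemma cast_len (k l i : ℕ) (hi : i ≤ l / (k+1)) :
    (((k+1) * l + k - (k+1)^2 * i : ℕ) : ℤ) = ((k:ℤ)+1) * (l:ℤ) + (k:ℤ) - ((k:ℤ)+1)^2 * (i:ℤ) := by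
  have h1 : (k+1) * i ≤ l := by
    have h := (Nat.le_div_iff_mul_le (by omega : 0 < k+1)).mp hi
    rwa [Nat.mul_comm] at h
  have h2 : (k+1)^2 * i ≤ (k+1) * l + k := by
    calc (k+1)^2 * i = (k+1) * ((k+1) * i) := by ring
    _ ≤ (k+1) * l := Nat.mul_le_mul_left _ h1
    _ ≤ (k+1) * l + k := by omega
  push_cast [Nat.cast_sub h2]
  ring

lemma Phi_decomp (k l : ℕ) (a : ℕ → ℤ) (t x h : ℤ) :
    Phi k l a t x h
      = (Apart k l a t x h * Upart k l ((((k:ℤ)+1)*(x+h)+t : ℤ) : ℚ))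
        / (Apart k l a t 0 h * Upart k l ((((k:ℤ)+1)*h+t : ℤ) : ℚ)) := by
  rw [Phi, Apart, Apart, Upart, Upart]
  rw [Finset.prod_div_distrib, Finset.prod_div_distrib,
    Finset.prod_congr rfl (fun (j : ℕ) _ => Finset.prod_div_distrib (s := Finset.Icc 1 ((l + k - j)/(k+1))) _ _),
    Finset.prod_div_distrib]
  rw [div_mul_div_comm, div_mul_div_comm]
  congr 1
  · -- numerators
    rw [mul_assoc]
    congr 1
    congr 1
    · -- B part numerator
      refine Finset.prod_congr rfl fun j hj => Finset.prod_congr rfl fun i hi => ?_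
      rw [poch_natCast]
      congr 1
      push_cast
      ring
    · -- C part numerator
      refine Finset.prod_congr rfl fun i hi => ?_
      simp only [Finset.mem_Icc] at hi
      rw [show ((k:ℤ)+1) * (l:ℤ) + (k:ℤ) - ((k:ℤ)+1)^2 * (i:ℤ)
          = (((k+1) * l + k - (k+1)^2 * i : ℕ) : ℤ) from (cast_len k l i hi.2).symm]
      rw [poch_natCast]
      congr 1
      push_cast
      ring
  · -- denominators
    rw [mul_assoc]
    congr 1
    · refine Finset.prod_congr rfl fun i hi => ?_
      congr 2
      omega
    congr 1
    · refine Finset.prod_congr rfl fun j hj => Finset.prod_congr rfl fun i hi => ?_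
      rw [poch_natCast]
      congr 1
      push_cast
      ring
    · refine Finset.prod_congr rfl fun i hi => ?_
      simp only [Finset.mem_Icc] at hi
      rw [show ((k:ℤ)+1) * (l:ℤ) + (k:ℤ) - ((k:ℤ)+1)^2 * (i:ℤ)
          = (((k+1) * l + k - (k+1)^2 * i : ℕ) : ℤ) from (cast_len k l i hi.2).symm]
      rw [poch_natCast]
      congr 1
      push_cast
      ring
lemma C_len_nonneg (k l i : ℕ) (hi : i ≤ l / (k+1)) :
    (0:ℤ) ≤ ((k:ℤ)+1) * (l:ℤ) + (k:ℤ) - ((k:ℤ)+1)^2 * (i:ℤ) := by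
  rw [← cast_len k l i hi]
  exact Int.natCast_nonneg _

lemma Phi_pos (k l : ℕ) (a : ℕ → ℤ) (t' x' h : ℤ) (h0t : 0 ≤ t') (h0x : 0 ≤ x') (hh : 0 ≤ h)
    (hbd : ∀ i ∈ Finset.Icc 1 l, 1 ≤ a i ∧ a i ≤ h + i) : 0 < Phi k l a t' x' h := by
  have hk : (0:ℤ) ≤ (k:ℤ) := Int.natCast_nonneg k
  rw [Phi]
  refine mul_pos (mul_pos ?_ ?_) ?_
  · -- A part
    refine Finset.prod_pos fun i hi => ?_
    simp only [Finset.mem_Icc] at hi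
    obtain ⟨h1, h2⟩ := hbd i (by simp only [Finset.mem_Icc]; exact hi)
    have hka : (k:ℤ) * 1 ≤ (k:ℤ) * a i := mul_le_mul_of_nonneg_left h1 hk
    refine div_pos (poch_pos ?_ ?_) (poch_pos ?_ ?_)
    · exact_mod_cast (show (0:ℤ) < x' + h + (l:ℤ) + 1 - a i by omega)
    · rw [← Int.cast_add]
      exact_mod_cast (show (0:ℤ) < (x' + h + (l:ℤ) + 1 - a i)
        + (t' + ((k:ℤ)+1)*a i - (l:ℤ) - (k:ℤ)) by nlinarith [hka])
    · exact_mod_cast (show (0:ℤ) < h + (l:ℤ) + 1 - a i by omega)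
    · rw [← Int.cast_add]
      exact_mod_cast (show (0:ℤ) < (h + (l:ℤ) + 1 - a i)
        + (t' + ((k:ℤ)+1)*a i - (l:ℤ) - (k:ℤ)) by nlinarith [hka])
  · -- B part
    refine Finset.prod_pos fun j hj => Finset.prod_pos fun i hi => ?_
    simp only [Finset.mem_Icc] at hj hi
    have hi1 : (1:ℤ) ≤ (i:ℤ) := by exact_mod_cast hi.1
    have hj1 : (1:ℤ) ≤ (j:ℤ) := by exact_mod_cast hj.1
    have p1 : (0:ℤ) ≤ ((k:ℤ)+1)*(x'+h) := mul_nonneg (by omega) (by omega)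
    have p1' : (0:ℤ) ≤ ((k:ℤ)+1)*h := mul_nonneg (by omega) hh
    have p2 : (0:ℤ) ≤ (k:ℤ)*((k:ℤ)+1)*((i:ℤ)-1) :=
      mul_nonneg (mul_nonneg hk (by omega)) (by omega)
    have p3 : (0:ℤ) ≤ ((j:ℤ)-1)*(k:ℤ) := mul_nonneg (by omega) hk
    have hjq : (0:ℚ) ≤ (((j:ℕ):ℤ):ℚ) := by positivity
    refine div_pos (poch_pos ?_ (by
        have : (0:ℚ) < ((((k:ℤ)+1)*(x'+h)+t'+(k:ℤ)*((k:ℤ)+1)*(i:ℤ)+((j:ℤ)-1)*(k:ℤ)-((k:ℤ)+1)*((k:ℤ)-1) : ℤ) : ℚ) := by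
          exact_mod_cast (show (0:ℤ) < ((k:ℤ)+1)*(x'+h)+t'+(k:ℤ)*((k:ℤ)+1)*(i:ℤ)+((j:ℤ)-1)*(k:ℤ)-((k:ℤ)+1)*((k:ℤ)-1) by nlinarith [p1, p2, p3])
        linarith))
      (poch_pos ?_ (by
        have : (0:ℚ) < ((((k:ℤ)+1)*h+t'+(k:ℤ)*((k:ℤ)+1)*(i:ℤ)+((j:ℤ)-1)*(k:ℤ)-((k:ℤ)+1)*((k:ℤ)-1) : ℤ) : ℚ) := by
          exact_mod_cast (show (0:ℤ) < ((k:ℤ)+1)*h+t'+(k:ℤ)*((k:ℤ)+1)*(i:ℤ)+((j:ℤ)-1)*(k:ℤ)-((k:ℤ)+1)*((k:ℤ)-1) by nlinarith [p1', p2, p3])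
        linarith))
    · exact_mod_cast (show (0:ℤ) < ((k:ℤ)+1)*(x'+h)+t'+(k:ℤ)*((k:ℤ)+1)*(i:ℤ)+((j:ℤ)-1)*(k:ℤ)-((k:ℤ)+1)*((k:ℤ)-1) by nlinarith [p1, p2, p3])
    · exact_mod_cast (show (0:ℤ) < ((k:ℤ)+1)*h+t'+(k:ℤ)*((k:ℤ)+1)*(i:ℤ)+((j:ℤ)-1)*(k:ℤ)-((k:ℤ)+1)*((k:ℤ)-1) by nlinarith [p1', p2, p3])
  · -- C part
    refine Finset.prod_pos fun i hi => ?_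
    simp only [Finset.mem_Icc] at hi
    have hi1 : (1:ℤ) ≤ (i:ℤ) := by exact_mod_cast hi.1
    have p1 : (0:ℤ) ≤ ((k:ℤ)+1)*(x'+h) := mul_nonneg (by omega) (by omega)
    have p1' : (0:ℤ) ≤ ((k:ℤ)+1)*h := mul_nonneg (by omega) hh
    have p2 : (0:ℤ) ≤ (k:ℤ)*((k:ℤ)+1)*((i:ℤ)-1) :=
      mul_nonneg (mul_nonneg hk (by omega)) (by omega)
    have hn : (0:ℚ) ≤ ((((k:ℤ)+1) * (l:ℤ) + (k:ℤ) - ((k:ℤ)+1)^2 * (i:ℤ) : ℤ) : ℚ) := by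
      exact_mod_cast C_len_nonneg k l i hi.2
    refine div_pos (poch_pos ?_ (by
        have : (0:ℚ) < ((((k:ℤ)+1)*(x'+h)+t'+(k:ℤ)*((k:ℤ)+1)*(i:ℤ)-(k:ℤ)+1 : ℤ) : ℚ) := by
          exact_mod_cast (show (0:ℤ) < ((k:ℤ)+1)*(x'+h)+t'+(k:ℤ)*((k:ℤ)+1)*(i:ℤ)-(k:ℤ)+1 by nlinarith [p1, p2, sq_nonneg (k:ℤ)])
        linarith))
      (poch_pos ?_ (by
        have : (0:ℚ) < ((((k:ℤ)+1)*h+t'+(k:ℤ)*((k:ℤ)+1)*(i:ℤ)-(k:ℤ)+1 : ℤ) : ℚ) := by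
          exact_mod_cast (show (0:ℤ) < ((k:ℤ)+1)*h+t'+(k:ℤ)*((k:ℤ)+1)*(i:ℤ)-(k:ℤ)+1 by nlinarith [p1', p2, sq_nonneg (k:ℤ)])
        linarith))
    · exact_mod_cast (show (0:ℤ) < ((k:ℤ)+1)*(x'+h)+t'+(k:ℤ)*((k:ℤ)+1)*(i:ℤ)-(k:ℤ)+1 by nlinarith [p1, p2, sq_nonneg (k:ℤ)])
    · exact_mod_cast (show (0:ℤ) < ((k:ℤ)+1)*h+t'+(k:ℤ)*((k:ℤ)+1)*(i:ℤ)-(k:ℤ)+1 by nlinarith [p1', p2, sq_nonneg (k:ℤ)])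

lemma a_bounds (l : ℕ) (a : ℕ → ℤ) (h : ℤ) (hl : 1 ≤ l)
    (hmono : ∀ i j : ℕ, 1 ≤ i → i < j → j ≤ l → a i < a j)
    (hpos : ∀ i ∈ Finset.Icc 1 l, 1 ≤ a i) (hal : a l = h + (l : ℤ)) :
    ∀ i ∈ Finset.Icc 1 l, 1 ≤ a i ∧ a i ≤ h + i := by
  have gap : ∀ d : ℕ, ∀ j : ℕ, 1 ≤ j → j + d ≤ l → a j + d ≤ a (j + d) := by
    intro d
    induction d with
    | zero => intro j _ _; simp
    | succ n ihn =>
      intro j hj hjd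
      have h1 := ihn j hj (by omega)
      have h2 := hmono (j+n) (j+n+1) (by omega) (by omega) (by omega)
      have e : j + (n+1) = (j+n)+1 := by omega
      rw [e]
      push_cast at h1 ⊢
      omega
  intro i hi
  refine ⟨hpos i hi, ?_⟩
  simp only [Finset.mem_Icc] at hi
  have hgap := gap (l - i) i hi.1 (by omega)
  rw [show i + (l - i) = l by omega, hal] at hgap
  have hcast : ((l - i : ℕ) : ℤ) = (l:ℤ) - (i:ℤ) := by omega
  omega
/-- Simplification of the second ratio in the Kuo recurrence: with `a 1 = 1`,
`a l = h + l`, `l ≥ 1`, `t ≥ 1`, `x ≥ 1`, the ratio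
`Φ_k((a_j)_{j=1}^{l-1}; t-1,x+1,h)·Φ_k((a_j)_{j=1}^l; t,x-1,h) /
 (Φ_k((a_j)_{j=1}^{l-1}; t-1,x,h)·Φ_k((a_j)_{j=1}^l; t,x,h))`
equals `x((k+1)x+(k+1)h+t) / (((k+1)(x+l+h-1)+t)(x+t+k(l-1)+(k+1)h))`. -/
theorem Phi_ratio_second (k l : ℕ) (a : ℕ → ℤ) (t x h : ℤ)
    (hl : 1 ≤ l) (ht : 1 ≤ t) (hx : 1 ≤ x) (hh : 0 ≤ h)
    (hmono : ∀ i j : ℕ, 1 ≤ i → i < j → j ≤ l → a i < a j)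
    (hpos : ∀ i ∈ Finset.Icc 1 l, 1 ≤ a i)
    (ha1 : a 1 = 1) (hal : a l = h + (l : ℤ)) :
    Phi k (l - 1) a (t - 1) (x + 1) h * Phi k l a t (x - 1) h
        / (Phi k (l - 1) a (t - 1) x h * Phi k l a t x h)
      = (x : ℚ) * (((k : ℚ) + 1) * (x : ℚ) + ((k : ℚ) + 1) * (h : ℚ) + (t : ℚ))
        / ((((k : ℚ) + 1) * ((x : ℚ) + (l : ℚ) + (h : ℚ) - 1) + (t : ℚ))
          * ((x : ℚ) + (t : ℚ) + (k : ℚ) * ((l : ℚ) - 1) + ((k : ℚ) + 1) * (h : ℚ))) := by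
  have hbd := a_bounds l a h hl hmono hpos hal
  have hbd1 : ∀ i ∈ Finset.Icc 1 (l-1), 1 ≤ a i ∧ a i ≤ h + i := by
    intro i hi
    refine hbd i ?_
    simp only [Finset.mem_Icc] at hi ⊢
    omega
  have hkz : (0:ℤ) ≤ (k:ℤ) := Int.natCast_nonneg k
  have hP1 : 0 < Phi k (l-1) a (t-1) x h :=
    Phi_pos k (l-1) a (t-1) x h (by omega) (by omega) hh hbd1
  have hP2 : 0 < Phi k l a t x h :=
    Phi_pos k l a t x h (by omega) (by omega) hh hbd
  -- cast helpers
  have hxq : (1:ℚ) ≤ (x:ℚ) := by exact_mod_cast hx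
  have htq : (1:ℚ) ≤ (t:ℚ) := by exact_mod_cast ht
  have hhq : (0:ℚ) ≤ (h:ℚ) := by exact_mod_cast hh
  have hlq : (1:ℚ) ≤ (l:ℚ) := by exact_mod_cast hl
  have hkq : (0:ℚ) ≤ (k:ℚ) := by positivity
  have hwpos : (0:ℚ) < ((((k:ℤ)+1)*(x+h)+t : ℤ) : ℚ) := by
    have : (0:ℤ) < ((k:ℤ)+1)*(x+h)+t := by nlinarith [mul_nonneg (show (0:ℤ) ≤ (k:ℤ)+1 by omega) (show (0:ℤ) ≤ x + h by omega)]
    exact_mod_cast this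
  have hum := UM k l hl ((((k:ℤ)+1)*(x+h)+t : ℤ) : ℚ) hwpos
  have ham := AM k l a t x h hl ht hx hh hkz hbd hal
  have hw_eq : ((((k:ℤ)+1)*(x+h)+t : ℤ) : ℚ) = ((k:ℚ)+1)*((x:ℚ)+(h:ℚ))+(t:ℚ) := by
    push_cast; ring
  have hA_eq : ((x + h + t + (k:ℤ)*(h+(l:ℤ)) - (k:ℤ) : ℤ) : ℚ)
      = (x:ℚ)+(t:ℚ)+(k:ℚ)*((l:ℚ)-1)+((k:ℚ)+1)*(h:ℚ) := by
    push_cast; ring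
  have aw1 : ((((k:ℤ)+1)*(x+1+h)+(t-1) : ℤ) : ℚ)
      = (((k:ℚ)+1)*((x:ℚ)+(h:ℚ))+(t:ℚ)) + (k:ℚ) := by push_cast; ring
  have aw2 : ((((k:ℤ)+1)*(x+h)+(t-1) : ℤ) : ℚ)
      = (((k:ℚ)+1)*((x:ℚ)+(h:ℚ))+(t:ℚ)) - 1 := by push_cast; ring
  have aw3 : ((((k:ℤ)+1)*(x-1+h)+t : ℤ) : ℚ)
      = (((k:ℚ)+1)*((x:ℚ)+(h:ℚ))+(t:ℚ)) - ((k:ℚ)+1) := by push_cast; ring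
  rw [hA_eq] at ham
  rw [hw_eq] at hum
  have hne1 : Phi k (l-1) a (t-1) x h * Phi k l a t x h ≠ 0 := (mul_pos hP1 hP2).ne'
  have hne2 : ((((k:ℚ)+1) * ((x:ℚ)+(l:ℚ)+(h:ℚ)-1) + (t:ℚ))
      * ((x:ℚ)+(t:ℚ)+(k:ℚ)*((l:ℚ)-1)+((k:ℚ)+1)*(h:ℚ))) ≠ 0 := by
    have h1 : (0:ℚ) < ((k:ℚ)+1) * ((x:ℚ)+(l:ℚ)+(h:ℚ)-1) + (t:ℚ) := by nlinarith
    have h2 : (0:ℚ) < (x:ℚ)+(t:ℚ)+(k:ℚ)*((l:ℚ)-1)+((k:ℚ)+1)*(h:ℚ) := by nlinarith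
    positivity
  rw [div_eq_div_iff hne1 hne2]
  rw [Phi_decomp k (l-1) a (t-1) (x+1) h, Phi_decomp k (l-1) a (t-1) x h,
      Phi_decomp k l a t (x-1) h, Phi_decomp k l a t x h]
  rw [aw1, aw2, aw3, hw_eq]
  simp only [div_eq_mul_inv]
  linear_combination
    ((Apart k (l-1) a (t-1) 0 h * Upart k (l-1) ((((k:ℤ)+1)*h+(t-1) : ℤ) : ℚ))⁻¹
      * (Apart k l a t 0 h * Upart k l ((((k:ℤ)+1)*h+t : ℤ) : ℚ))⁻¹
      * Upart k (l-1) ((((k:ℚ)+1)*((x:ℚ)+(h:ℚ))+(t:ℚ)) + (k:ℚ))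
      * Upart k l ((((k:ℚ)+1)*((x:ℚ)+(h:ℚ))+(t:ℚ)) - ((k:ℚ)+1))
      * ((((k:ℚ)+1)*((x:ℚ)+(h:ℚ))+(t:ℚ)) + ((k:ℚ)+1)*((l:ℚ)-1))) * ham
    + ((Apart k (l-1) a (t-1) 0 h * Upart k (l-1) ((((k:ℤ)+1)*h+(t-1) : ℤ) : ℚ))⁻¹
      * (Apart k l a t 0 h * Upart k l ((((k:ℤ)+1)*h+t : ℤ) : ℚ))⁻¹
      * Apart k (l-1) a (t-1) x h * Apart k l a t x h * (x:ℚ)) * hum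
end

section
/- For positive integers a, b, c, the triple product ∏_{i=1}^a ∏_{j=1}^b ∏_{k=1}^c (i+j+k-1)/(i+j+k-2) is a positive integer. -/
open Finset

namespace MacMahonAux

lemma mod_add_le' (m x y : ℕ) : (x + y) % m ≤ x % m + y % m := by
  conv_lhs => rw [Nat.add_mod]
  exact Nat.mod_le _ _

/-- `S a m t = ∑_{i<a} (i+t) % m`. -/
def S (a m t : ℕ) : ℕ := ∑ i ∈ range a, (i + t) % m

lemma S_succ (a m t : ℕ) : S a m (t + 1) + t % m = S a m t + (a + t) % m := by
  have h1 : ∑ i ∈ range (a+1), (i + t) % m = S a m t + (a + t) % m :=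
    Finset.sum_range_succ _ a
  have h2 : ∑ i ∈ range (a+1), (i + t) % m
      = (∑ i ∈ range a, (i + 1 + t) % m) + (0 + t) % m :=
    Finset.sum_range_succ' _ a
  have h3 : (∑ i ∈ range a, (i + 1 + t) % m) = S a m (t+1) := by
    unfold S
    apply Finset.sum_congr rfl
    intro i _
    congr 1
    omega
  simp only [Nat.zero_add] at h2
  omega

lemma S_add_period (a m t : ℕ) : S a m (t + m) = S a m t := by
  unfold S
  apply Finset.sum_congr rfl
  intro i _
  have h : i + (t + m) = (i + t) + m := by omega
  rw [h, Nat.add_mod_right]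

lemma S_mul_add (a m r q : ℕ) : S a m (r + q * m) = S a m r := by
  induction q with
  | zero => simp
  | succ q ih =>
    have h : r + (q+1) * m = (r + q * m) + m := by ring
    rw [h, S_add_period, ih]

lemma S_mod (a m t : ℕ) : S a m t = S a m (t % m) := by
  conv_lhs => rw [← Nat.mod_add_div' t m]
  exact S_mul_add a m (t % m) (t / m)

lemma S_mono (a m : ℕ) {t t' : ℕ} (h : t ≤ t') (h' : t' < m) :
    S a m (t' + 1) + S a m t ≤ S a m (t + 1) + S a m t' := by
  have h1 := S_succ a m t
  have h2 := S_succ a m t'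
  have h3 : (a + t') % m ≤ (a + t) % m + (t' - t) % m := by
    have e : a + t + (t' - t) = a + t' := by omega
    calc (a + t') % m = (a + t + (t' - t)) % m := by rw [e]
    _ ≤ _ := mod_add_le' _ _ _
  have h4 : (t' - t) % m ≤ t' - t := Nat.mod_le _ _
  have h5 : t % m = t := Nat.mod_eq_of_lt (lt_of_le_of_lt h h')
  have h6 : t' % m = t' := Nat.mod_eq_of_lt h'
  omega

lemma S_caseA (a m : ℕ) : ∀ c b, b + c ≤ m → S a m (b + c) + S a m 0 ≤ S a m b + S a m c := by
  intro c
  induction c with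
  | zero => intro b h; simp
  | succ c ih =>
    intro b h
    have hb : b + c ≤ m := by omega
    have h1 := ih b hb
    have h2 := S_mono a m (show c ≤ b + c by omega) (show b + c < m by omega)
    have e : b + (c+1) = (b + c) + 1 := by omega
    rw [e]
    omega

lemma S_caseB (a m : ℕ) : ∀ k c, c < m → k ≤ c →
    S a m (c - k) + S a m 0 ≤ S a m (m - k) + S a m c := by
  intro k
  induction k with
  | zero =>
    intro c hc _
    have hm : S a m m = S a m 0 := by
      have := S_add_period a m 0
      simpa using this
    simp only [Nat.sub_zero, hm]
    omega
  | succ k ih =>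
    intro c hc hk
    have h1 := ih c hc (by omega)
    have h2 := S_mono a m (show c - (k+1) ≤ m - (k+1) by omega) (show m - (k+1) < m by omega)
    have e1 : m - (k+1) + 1 = m - k := by omega
    have e2 : c - (k+1) + 1 = c - k := by omega
    rw [e1, e2] at h2
    omega

lemma S_superadd (a m b c : ℕ) (hm : 0 < m) :
    S a m (b + c) + S a m 0 ≤ S a m b + S a m c := by
  have hb : b % m < m := Nat.mod_lt _ hm
  have hc : c % m < m := Nat.mod_lt _ hm
  rw [S_mod a m b, S_mod a m c, S_mod a m (b+c)]
  have e : (b + c) % m = (b % m + c % m) % m := by rw [Nat.add_mod]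
  rw [e, ← S_mod a m (b % m + c % m)]
  by_cases h : b % m + c % m ≤ m
  · exact S_caseA a m (c % m) (b % m) h
  · have h2 := S_caseB a m (m - b % m) (c % m) hc (by omega)
    have e1 : c % m - (m - b % m) = b % m + c % m - m := by omega
    have e2 : m - (m - b % m) = b % m := by omega
    rw [e1, e2] at h2
    have e3 : b % m + c % m = (b % m + c % m - m) + m := by omega
    rw [e3, S_add_period]
    exact h2

lemma count_div (m : ℕ) : ∀ (b x : ℕ),
    (∑ j ∈ range b, if m ∣ (x + j + 1) then 1 else 0) = (x + b) / m - x / m := by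
  intro b
  induction b with
  | zero => intro x; simp
  | succ b ih =>
    intro x
    rw [Finset.sum_range_succ, ih]
    have h1 : (x + (b+1)) / m = (x + b) / m + if m ∣ (x + b + 1) then 1 else 0 := by
      have e : x + (b+1) = (x + b) + 1 := by omega
      rw [e, Nat.succ_div]
    have h2 : x / m ≤ (x + b) / m := Nat.div_le_div_right (by omega)
    rw [h1]
    split_ifs with h <;> omega

lemma cnt_term (m i t b : ℕ) :
    m * ((i + t + b) / m - (i + t) / m) + (i + t + b) % m = b + (i + t) % m := by
  have h3 : (i + t) / m ≤ (i + t + b) / m := Nat.div_le_div_right (by omega)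
  obtain ⟨d, hd⟩ : ∃ d, (i + t + b) / m = (i + t) / m + d := ⟨_, (Nat.add_sub_cancel' h3).symm⟩
  rw [hd, Nat.add_sub_cancel_left]
  have h1 := Nat.div_add_mod (i + t + b) m
  have h2 := Nat.div_add_mod (i + t) m
  rw [hd, Nat.mul_add] at h1
  omega

lemma cnt_eq (a m b t : ℕ) :
    m * (∑ i ∈ range a, ((i + t + b) / m - (i + t) / m)) + S a m (t + b)
      = a * b + S a m t := by
  unfold S
  rw [Finset.mul_sum, ← Finset.sum_add_distrib]
  have hrhs : a * b + ∑ i ∈ range a, (i + t) % m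
      = ∑ i ∈ range a, (b + (i + t) % m) := by
    rw [Finset.sum_add_distrib, Finset.sum_const, Finset.card_range, smul_eq_mul]
  rw [hrhs]
  apply Finset.sum_congr rfl
  intro i _
  have e : i + (t + b) = i + t + b := by omega
  rw [e]
  exact cnt_term m i t b

lemma cnt_le (a m b c : ℕ) (hm : 0 < m) :
    (∑ i ∈ range a, ((i + b) / m - i / m))
      ≤ ∑ i ∈ range a, ((i + c + b) / m - (i + c) / m) := by
  have h0 := cnt_eq a m b 0
  have hc := cnt_eq a m b c
  have hs := S_superadd a m c b hm
  simp only [Nat.add_zero, Nat.zero_add] at h0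
  have key : m * (∑ i ∈ range a, ((i + b) / m - i / m))
      ≤ m * (∑ i ∈ range a, ((i + c + b) / m - (i + c) / m)) := by
    linarith
  exact Nat.le_of_mul_le_mul_left key hm

lemma val_eq_sum {p n : ℕ} (hp : p.Prime) (hn : n ≠ 0) {L : ℕ} (hL : n ≤ L) :
    n.factorization p = ∑ k ∈ Icc 1 L, if p ^ k ∣ n then 1 else 0 := by
  have hdvd : p ^ (n.factorization p) ∣ n := Nat.ordProj_dvd n p
  have hle : p ^ (n.factorization p) ≤ n := Nat.le_of_dvd (Nat.pos_of_ne_zero hn) hdvd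
  have hvn : n.factorization p ≤ n := by
    calc n.factorization p ≤ 2 ^ (n.factorization p) := Nat.le_of_lt Nat.lt_two_pow_self
    _ ≤ p ^ (n.factorization p) := Nat.pow_le_pow_left hp.two_le _
    _ ≤ n := hle
  have hvL : n.factorization p ≤ L := le_trans hvn hL
  have h1 : ∀ k, (p ^ k ∣ n ↔ k ≤ n.factorization p) := fun k =>
    Nat.Prime.pow_dvd_iff_le_factorization hp hn
  symm
  calc (∑ k ∈ Icc 1 L, if p ^ k ∣ n then 1 else 0)
      = ∑ k ∈ Icc 1 L, if k ≤ n.factorization p then 1 else 0 := by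
        apply Finset.sum_congr rfl; intro k _; simp [h1 k]
    _ = ((Icc 1 L).filter (· ≤ n.factorization p)).card := by
        rw [Finset.sum_boole]; norm_cast
    _ = (Icc 1 (n.factorization p)).card := by
        congr 1
        ext k
        simp only [Finset.mem_filter, Finset.mem_Icc]
        omega
    _ = n.factorization p := by rw [Nat.card_Icc]; omega

lemma fact_prod_prod (a b : ℕ) (f : ℕ → ℕ → ℕ) (hf : ∀ i j, f i j ≠ 0) (p : ℕ) :
    (∏ i ∈ range a, ∏ j ∈ range b, f i j).factorization p
    = ∑ i ∈ range a, ∑ j ∈ range b, (f i j).factorization p := by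
  rw [Nat.factorization_prod (fun i _ => Finset.prod_ne_zero_iff.mpr (fun j _ => hf i j))]
  rw [Finsupp.finset_sum_apply]
  apply Finset.sum_congr rfl
  intro i _
  rw [Nat.factorization_prod (fun j _ => hf i j), Finsupp.finset_sum_apply]

lemma den_dvd_num (a b c : ℕ) :
    (∏ i ∈ range a, ∏ j ∈ range b, (i + j + 1)) ∣
      (∏ i ∈ range a, ∏ j ∈ range b, (i + j + c + 1)) := by
  have hden0 : ∀ i j : ℕ, i + j + 1 ≠ 0 := fun i j => by omega
  have hnum0 : ∀ i j : ℕ, i + j + c + 1 ≠ 0 := fun i j => by omega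
  have hd : (∏ i ∈ range a, ∏ j ∈ range b, (i + j + 1)) ≠ 0 := by
    rw [Finset.prod_ne_zero_iff]
    exact fun i _ => Finset.prod_ne_zero_iff.mpr (fun j _ => hden0 i j)
  have hn : (∏ i ∈ range a, ∏ j ∈ range b, (i + j + c + 1)) ≠ 0 := by
    rw [Finset.prod_ne_zero_iff]
    exact fun i _ => Finset.prod_ne_zero_iff.mpr (fun j _ => hnum0 i j)
  rw [← Nat.factorization_le_iff_dvd hd hn, Finsupp.le_def]
  intro p
  by_cases hp : p.Prime
  · rw [fact_prod_prod a b (fun i j => i + j + 1) hden0 p,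
      fact_prod_prod a b (fun i j => i + j + c + 1) hnum0 p]
    have hL1 : ∀ i ∈ range a, ∀ j ∈ range b, i + j + 1 ≤ a + b + c + 1 := by
      intro i hi j hj
      rw [Finset.mem_range] at hi hj
      omega
    have hL2 : ∀ i ∈ range a, ∀ j ∈ range b, i + j + c + 1 ≤ a + b + c + 1 := by
      intro i hi j hj
      rw [Finset.mem_range] at hi hj
      omega
    calc ∑ i ∈ range a, ∑ j ∈ range b, (i + j + 1).factorization p
        = ∑ i ∈ range a, ∑ j ∈ range b, ∑ k ∈ Icc 1 (a+b+c+1),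
            if p ^ k ∣ (i + j + 1) then 1 else 0 := by
          apply Finset.sum_congr rfl; intro i hi
          apply Finset.sum_congr rfl; intro j hj
          exact val_eq_sum hp (hden0 i j) (hL1 i hi j hj)
      _ = ∑ k ∈ Icc 1 (a+b+c+1), ∑ i ∈ range a, ∑ j ∈ range b,
            if p ^ k ∣ (i + j + 1) then 1 else 0 := by
          rw [show (∑ i ∈ range a, ∑ j ∈ range b, ∑ k ∈ Icc 1 (a+b+c+1),
              if p ^ k ∣ (i + j + 1) then 1 else 0)
            = ∑ i ∈ range a, ∑ k ∈ Icc 1 (a+b+c+1), ∑ j ∈ range b,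
              if p ^ k ∣ (i + j + 1) then 1 else 0 from
            Finset.sum_congr rfl (fun i _ => Finset.sum_comm)]
          exact Finset.sum_comm
      _ ≤ ∑ k ∈ Icc 1 (a+b+c+1), ∑ i ∈ range a, ∑ j ∈ range b,
            if p ^ k ∣ (i + j + c + 1) then 1 else 0 := by
          apply Finset.sum_le_sum
          intro k _
          have hm : 0 < p ^ k := pow_pos hp.pos k
          calc ∑ i ∈ range a, ∑ j ∈ range b, (if p ^ k ∣ (i + j + 1) then 1 else 0)
              = ∑ i ∈ range a, ((i + b) / p ^ k - i / p ^ k) := by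
                apply Finset.sum_congr rfl; intro i _
                exact count_div (p ^ k) b i
            _ ≤ ∑ i ∈ range a, ((i + c + b) / p ^ k - (i + c) / p ^ k) :=
                cnt_le a (p ^ k) b c hm
            _ = ∑ i ∈ range a, ∑ j ∈ range b, (if p ^ k ∣ (i + j + c + 1) then 1 else 0) := by
                apply Finset.sum_congr rfl; intro i _
                rw [← count_div (p ^ k) b (i + c)]
                apply Finset.sum_congr rfl; intro j _
                have e : i + c + j + 1 = i + j + c + 1 := by omega
                rw [e]
      _ = ∑ i ∈ range a, ∑ j ∈ range b, (i + j + c + 1).factorization p := by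
          rw [Finset.sum_comm]
          apply Finset.sum_congr rfl; intro i hi
          rw [Finset.sum_comm]
          apply Finset.sum_congr rfl; intro j hj
          exact (val_eq_sum hp (hnum0 i j) (hL2 i hi j hj)).symm
  · rw [Nat.factorization_eq_zero_of_not_prime _ hp, Nat.factorization_eq_zero_of_not_prime _ hp]

lemma telescope (c : ℕ) (x : ℚ) (hx : 0 < x) :
    ∏ k ∈ range c, ((x + k + 1) / (x + k)) = (x + c) / x := by
  induction c with
  | zero => simp [div_self (ne_of_gt hx)]
  | succ c ih =>
    rw [Finset.prod_range_succ, ih]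
    have h1 : x ≠ 0 := ne_of_gt hx
    have h2 : x + (c : ℚ) ≠ 0 := by positivity
    push_cast
    field_simp
    ring

lemma prod_Icc_eq_range (n : ℕ) (f : ℕ → ℚ) :
    ∏ i ∈ Icc 1 n, f i = ∏ i ∈ range n, f (i + 1) := by
  rw [← Finset.Ico_add_one_right_eq_Icc, Finset.prod_Ico_eq_prod_range]
  exact Finset.prod_congr (by norm_num) (fun i _ => by rw [Nat.add_comm])

end MacMahonAux

open MacMahonAux in
/-- For positive integers `a, b, c`, MacMahon's triple product
`∏_{i=1}^a ∏_{j=1}^b ∏_{k=1}^c (i+j+k-1)/(i+j+k-2)` is a positive integer. -/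
theorem macmahonProd_is_pos_integer (a b c : ℕ) (ha : 0 < a) (hb : 0 < b) (hc : 0 < c) :
    ∃ n : ℕ, 0 < n ∧
      (∏ i ∈ Finset.Icc 1 a, ∏ j ∈ Finset.Icc 1 b, ∏ k ∈ Finset.Icc 1 c,
        ((i : ℚ) + j + k - 1) / ((i : ℚ) + j + k - 2)) = (n : ℚ) := by
  set num := ∏ i ∈ range a, ∏ j ∈ range b, (i + j + c + 1) with hnumdef
  set den := ∏ i ∈ range a, ∏ j ∈ range b, (i + j + 1) with hdendef
  have hdenpos : 0 < den :=
    Finset.prod_pos (fun i _ => Finset.prod_pos (fun j _ => by omega))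
  have hnumpos : 0 < num :=
    Finset.prod_pos (fun i _ => Finset.prod_pos (fun j _ => by omega))
  have hdvd : den ∣ num := den_dvd_num a b c
  refine ⟨num / den, Nat.div_pos (Nat.le_of_dvd hnumpos hdvd) hdenpos, ?_⟩
  have main : (∏ i ∈ Finset.Icc 1 a, ∏ j ∈ Finset.Icc 1 b, ∏ k ∈ Finset.Icc 1 c,
      ((i : ℚ) + j + k - 1) / ((i : ℚ) + j + k - 2))
      = (num : ℚ) / (den : ℚ) := by
    calc (∏ i ∈ Finset.Icc 1 a, ∏ j ∈ Finset.Icc 1 b, ∏ k ∈ Finset.Icc 1 c,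
        ((i : ℚ) + j + k - 1) / ((i : ℚ) + j + k - 2))
        = ∏ i ∈ range a, ∏ j ∈ range b,
            (((i : ℚ) + j + c + 1) / ((i : ℚ) + j + 1)) := by
          rw [prod_Icc_eq_range]
          apply Finset.prod_congr rfl; intro i _
          rw [prod_Icc_eq_range]
          apply Finset.prod_congr rfl; intro j _
          rw [prod_Icc_eq_range]
          have hx : (0 : ℚ) < (i : ℚ) + j + 1 := by positivity
          calc (∏ k ∈ range c,
              (((i+1 : ℕ) : ℚ) + ((j+1 : ℕ) : ℚ) + ((k+1 : ℕ) : ℚ) - 1) /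
                (((i+1 : ℕ) : ℚ) + ((j+1 : ℕ) : ℚ) + ((k+1 : ℕ) : ℚ) - 2))
              = ∏ k ∈ range c,
                ((((i : ℚ) + j + 1) + k + 1) / (((i : ℚ) + j + 1) + k)) := by
                apply Finset.prod_congr rfl; intro k _
                push_cast
                ring_nf
            _ = (((i : ℚ) + j + 1) + c) / ((i : ℚ) + j + 1) := telescope c _ hx
            _ = ((i : ℚ) + j + c + 1) / ((i : ℚ) + j + 1) := by ring_nf
      _ = (∏ i ∈ range a, ∏ j ∈ range b, ((i : ℚ) + j + c + 1)) /
            (∏ i ∈ range a, ∏ j ∈ range b, ((i : ℚ) + j + 1)) := by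
          rw [← Finset.prod_div_distrib]
          apply Finset.prod_congr rfl; intro i _
          rw [← Finset.prod_div_distrib]
      _ = (num : ℚ) / (den : ℚ) := by
          rw [hnumdef, hdendef]
          push_cast
          rfl
  rw [main, Nat.cast_div hdvd]
  exact_mod_cast hdenpos.ne'
end

section
/- Let l ≥ 1 and let (a_i)_{i=1}^l be a strictly increasing sequence of positive integers with a_1 > 1 and a_l ≤ h + l. With f_{x,t,h} as in the main theorem's product formula, one has f_{x,t,h}(a_1,…,a_l) = f_{x, t+(k+1)(a_1-1), h+1-a_1}(1, a_2-a_1+1, …, a_l-a_1+1). -/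
open Finset

/-- The conjectured tiling formula `f_{x,t,h}(a_1,…,a_l)` of the main theorem:
`f = Φ_k((a_j)_{j=1}^l; t,x,h) · ∏_{i=1}^l Φ_k((a_j)_{j=1}^i; t, a_{i+1}-a_i-1, a_{i+1}-i-1)`,
with the convention `a_{l+1} = l + h + 1` built in. -/
noncomputable def tilingF (k l : ℕ) (a : ℕ → ℤ) (t x h : ℤ) : ℚ :=
  let a' : ℕ → ℤ := fun i => if i = l + 1 then (l : ℤ) + h + 1 else a i
  Phi k l a' t x h *
    ∏ i ∈ Finset.Icc 1 l,
      Phi k i a' t (a' (i + 1) - a' i - 1) (a' (i + 1) - (i : ℤ) - 1)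

lemma Phi_shift (k m : ℕ) (a : ℕ → ℤ) (s t x h : ℤ) :
    Phi k m (fun i => a i - s) (t + ((k : ℤ) + 1) * s) x (h - s) = Phi k m a t x h := by
  unfold Phi
  congr 1
  · congr 1
    · refine Finset.prod_congr rfl fun i _ => ?_
      congr 1 <;> congr 1 <;> push_cast <;> ring
    · refine Finset.prod_congr rfl fun j _ => Finset.prod_congr rfl fun i _ => ?_
      congr 1 <;> congr 1 <;> push_cast <;> ring
  · refine Finset.prod_congr rfl fun i _ => ?_
    congr 1 <;> congr 1 <;> push_cast <;> ring

/-- Consistency of the product formula under the forced-lozenge reduction used when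
`a_1 > 1`: `f_{x,t,h}(a_1,…,a_l)
  = f_{x, t+(k+1)(a_1-1), h+1-a_1}(1, a_2-a_1+1, …, a_l-a_1+1)`. -/
theorem tilingF_bottom_reduction (k l : ℕ) (a : ℕ → ℤ) (t x h : ℤ)
    (hl : 1 ≤ l) (ht : 0 ≤ t) (hx : 0 ≤ x) (hh : 0 ≤ h)
    (hmono : ∀ i j : ℕ, 1 ≤ i → i < j → j ≤ l → a i < a j)
    (hpos : ∀ i ∈ Finset.Icc 1 l, 1 ≤ a i)
    (ha1 : 1 < a 1) (hal : a l ≤ h + (l : ℤ)) (hha : a 1 ≤ h + 1) :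
    tilingF k l a t x h
      = tilingF k l (fun i => a i - a 1 + 1) (t + ((k : ℤ) + 1) * (a 1 - 1)) x
          (h + 1 - a 1) := by
  unfold tilingF
  set A : ℕ → ℤ := fun i => if i = l + 1 then (l : ℤ) + h + 1 else a i with hA
  set B : ℕ → ℤ := fun i =>
    if i = l + 1 then (l : ℤ) + (h + 1 - a 1) + 1 else a i - a 1 + 1 with hB
  have hBA : B = fun i => A i - (a 1 - 1) := by
    funext i
    simp only [hA, hB]
    split <;> ring
  have hh' : h + 1 - a 1 = h - (a 1 - 1) := by ring
  rw [hBA, hh']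
  dsimp only
  symm
  congr 1
  · exact Phi_shift k l A (a 1 - 1) t x h
  · refine Finset.prod_congr rfl fun i _ => ?_
    have e1 : A (i + 1) - (a 1 - 1) - (A i - (a 1 - 1)) - 1 = A (i + 1) - A i - 1 := by ring
    have e2 : A (i + 1) - (a 1 - 1) - (i : ℤ) - 1 = (A (i + 1) - (i : ℤ) - 1) - (a 1 - 1) := by
      ring
    rw [e1, e2]
    exact Phi_shift k i A (a 1 - 1) t (A (i + 1) - A i - 1) (A (i + 1) - (i : ℤ) - 1)
end
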